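/- arXiv:1308.4308 — 3 statements merged into one kernel-verified Lean document; each statement's English description precedes it below -/
import Mathlib

section
/- Let G be a finite simple graph on the vertex set {1,…,n} with m edges. Then the ideal P_G of diagonal 2-minors coincides with the toric ideal I_{A_G}; that is, P_G equals the kernel of the K-algebra homomorphism φ: S → K[t_1^{±1},…,t_{n+m}^{±1}] sending each variable of S to the Laurent monomial t^a, where a ∈ A_G is the vector indexed by that variable. -/
open MvPolynomial

/-- The set of variables of the polynomial ring `S`: one variable `x_{ii}` for each vertex `i`
of `G` and two variables `x_{ij}`, `x_{ji}` for each edge `{i,j}` of `G`. -/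
abbrev VarSet (n : ℕ) (G : SimpleGraph (Fin n)) : Type :=
  {p : Fin n × Fin n // p.1 = p.2 ∨ G.Adj p.1 p.2}

/-- The diagonal 2-minor `f_{ij} = x_{ii} x_{jj} - x_{ij} x_{ji}`. -/
noncomputable def fij (K : Type) [Field K] {n : ℕ} {G : SimpleGraph (Fin n)}
    {i j : Fin n} (h : G.Adj i j) : MvPolynomial (VarSet n G) K :=
  X ⟨(i, i), Or.inl rfl⟩ * X ⟨(j, j), Or.inl rfl⟩ -
    X ⟨(i, j), Or.inr h⟩ * X ⟨(j, i), Or.inr h.symm⟩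

/-- The ideal `P_G` generated by the diagonal 2-minors `f_{ij}` for edges `{i,j}`, `i < j`. -/
noncomputable def PG (K : Type) [Field K] (n : ℕ) (G : SimpleGraph (Fin n)) :
    Ideal (MvPolynomial (VarSet n G) K) :=
  Ideal.span {f | ∃ i j : Fin n, ∃ h : G.Adj i j, i < j ∧ f = fij K h}

/-- The index `t` of the edge `{i,j}` in the fixed enumeration `z` of the edges of `G`. -/
noncomputable def edgeIdx {n m : ℕ} {G : SimpleGraph (Fin n)} (z : Fin m ≃ G.edgeSet)
    {i j : Fin n} (h : G.Adj i j) : Fin m :=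
  z.symm ⟨s(i, j), G.mem_edgeSet.mpr h⟩

/-- The vector configuration `A_G ⊂ ℤ^{n+m}`, indexed by the variables of `S`:
the variable `x_{jj}` gets `e_j`; for the edge `z_t = {i,j}` with `i < j`, the variable `x_{ij}`
gets `e_i + e_j - e_{n+t}` and the variable `x_{ji}` gets `e_{n+t}`. -/
noncomputable def aVec (n m : ℕ) (G : SimpleGraph (Fin n)) (z : Fin m ≃ G.edgeSet)
    (v : VarSet n G) : (Fin n ⊕ Fin m) → ℤ :=
  if hij : v.1.1 = v.1.2 then Pi.single (Sum.inl v.1.1) 1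
  else
    have hadj : G.Adj v.1.1 v.1.2 := v.2.resolve_left hij
    if v.1.1 < v.1.2 then
      Pi.single (Sum.inl v.1.1) 1 + Pi.single (Sum.inl v.1.2) 1
        - Pi.single (Sum.inr (edgeIdx z hadj)) 1
    else Pi.single (Sum.inr (edgeIdx z hadj)) 1

/-- The `K`-algebra homomorphism `φ : S → K[t_1^{±1},…,t_{n+m}^{±1}]` sending each variable of
`S` to the Laurent monomial `t^a` given by the corresponding vector `a ∈ A_G`. -/
noncomputable def phiMap (K : Type) [Field K] (n m : ℕ) (G : SimpleGraph (Fin n))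
    (z : Fin m ≃ G.edgeSet) :
    MvPolynomial (VarSet n G) K →ₐ[K] AddMonoidAlgebra K ((Fin n ⊕ Fin m) → ℤ) :=
  MvPolynomial.aeval fun v => AddMonoidAlgebra.single (aVec n m G z v) (1 : K)

namespace PGAux

variable {K : Type} [Field K] {n m : ℕ} {G : SimpleGraph (Fin n)} (z : Fin m ≃ G.edgeSet)

/-- diagonal variable -/
def vd (G : SimpleGraph (Fin n)) (i : Fin n) : VarSet n G := ⟨(i,i), Or.inl rfl⟩
/-- edge variable -/
def ve {i j : Fin n} (h : G.Adj i j) : VarSet n G := ⟨(i,j), Or.inr h⟩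

lemma ve_symm_symm {i j : Fin n} (h : G.Adj i j) : ve h.symm.symm = ve h := rfl

lemma edgeIdx_symm {i j : Fin n} (h : G.Adj i j) : edgeIdx z h.symm = edgeIdx z h := by
  unfold edgeIdx; congr 1; exact Subtype.ext (Sym2.eq_swap)

lemma aVec_vd (i : Fin n) : aVec n m G z (vd G i) = Pi.single (Sum.inl i) 1 := by
  simp [aVec, vd]

lemma aVec_ve_lt {i j : Fin n} (h : G.Adj i j) (hlt : i < j) :
    aVec n m G z (ve h) = Pi.single (Sum.inl i) 1 + Pi.single (Sum.inl j) 1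
      - Pi.single (Sum.inr (edgeIdx z h)) 1 := by
  have hne : i ≠ j := h.ne
  unfold aVec
  rw [dif_neg (show (ve h).1.1 ≠ (ve h).1.2 from hne), if_pos (show (ve h).1.1 < (ve h).1.2 from hlt)]
  rfl

lemma aVec_ve_gt {i j : Fin n} (h : G.Adj i j) (hlt : j < i) :
    aVec n m G z (ve h) = Pi.single (Sum.inr (edgeIdx z h)) 1 := by
  have hne : i ≠ j := h.ne
  unfold aVec
  rw [dif_neg (show (ve h).1.1 ≠ (ve h).1.2 from hne),
    if_neg (show ¬ (ve h).1.1 < (ve h).1.2 from fun hc => absurd (lt_trans hc hlt) (lt_irrefl i))]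
  rfl


section C2
open AddMonoidAlgebra
variable {K : Type} [Field K] {n m : ℕ} {G : SimpleGraph (Fin n)} (z : Fin m ≃ G.edgeSet)

noncomputable def Amap (d : VarSet n G →₀ ℕ) : (Fin n ⊕ Fin m) → ℤ :=
  d.sum fun v k => (k : ℤ) • aVec n m G z v

lemma Amap_add (d₁ d₂ : VarSet n G →₀ ℕ) :
    Amap z (d₁ + d₂) = Amap z d₁ + Amap z d₂ :=
  Finsupp.sum_add_index' (fun v => by simp) (fun v k l => by push_cast; rw [add_smul])

lemma Amap_single (v : VarSet n G) (k : ℕ) :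
    Amap z (Finsupp.single v k) = (k : ℤ) • aVec n m G z v :=
  Finsupp.sum_single_index (by simp)

lemma phi_monomial (d : VarSet n G →₀ ℕ) (c : K) :
    phiMap K n m G z (monomial d c) = AddMonoidAlgebra.single (Amap z d) c := by
  rw [phiMap, aeval_monomial]
  have key : (d.prod fun v k => (AddMonoidAlgebra.single (aVec n m G z v) (1 : K)) ^ k) =
      AddMonoidAlgebra.single (Amap z d) 1 := by
    induction d using Finsupp.induction with
    | zero => simp [Amap, AddMonoidAlgebra.one_def]
    | single_add v k f hv hk ih =>
      rw [Finsupp.prod_add_index' (fun a => pow_zero _) (fun a b₁ b₂ => pow_add _ _ _)]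
      rw [show ((Finsupp.single v k).prod fun a => HPow.hPow (AddMonoidAlgebra.single
          (aVec n m G z a) (1 : K))) = AddMonoidAlgebra.single (aVec n m G z v) (1:K) ^ k from
        Finsupp.prod_single_index (pow_zero _)]
      rw [ih, Amap_add, Amap_single, AddMonoidAlgebra.single_pow, one_pow,
        AddMonoidAlgebra.single_mul_single, one_mul, natCast_zsmul]
  rw [key, AddMonoidAlgebra.coe_algebraMap]
  simp only [Function.comp_apply, Algebra.algebraMap_self, RingHom.id_apply]
  rw [AddMonoidAlgebra.single_mul_single, zero_add, mul_one]

end C2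
section C3
open AddMonoidAlgebra Finset
variable {K : Type} [Field K] {n m : ℕ} {G : SimpleGraph (Fin n)} (z : Fin m ≃ G.edgeSet)

lemma ve_eq_iff {a b i j : Fin n} (hab : G.Adj a b) (h : G.Adj i j) :
    ve hab = ve h ↔ a = i ∧ b = j := by
  constructor
  · intro he
    have := congrArg Subtype.val he
    simp only [ve] at this
    exact ⟨congrArg Prod.fst this, congrArg Prod.snd this⟩
  · rintro ⟨rfl, rfl⟩; rfl

lemma edgeIdx_eq_iff {a b i j : Fin n} (hab : G.Adj a b) (h : G.Adj i j) :
    edgeIdx z hab = edgeIdx z h ↔ (a = i ∧ b = j) ∨ (a = j ∧ b = i) := by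
  unfold edgeIdx
  rw [EmbeddingLike.apply_eq_iff_eq, Subtype.mk.injEq, Sym2.eq_iff]

lemma aVec_apply_inr (v : VarSet n G) {i j : Fin n} (h : G.Adj i j) (hlt : i < j) :
    aVec n m G z v (Sum.inr (edgeIdx z h)) =
      (if v = ve h.symm then 1 else 0) - (if v = ve h then 1 else 0) := by
  have hij : i ≠ j := h.ne
  by_cases hd : v.1.1 = v.1.2
  · have h1 : v ≠ ve h.symm := by
      intro he; rw [he] at hd; exact hij (hd.symm)
    have h2 : v ≠ ve h := by
      intro he; rw [he] at hd; exact hij hd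
    rw [if_neg h1, if_neg h2]
    rw [show aVec n m G z v = Pi.single (Sum.inl v.1.1) 1 from by rw [aVec, dif_pos hd]]
    simp
  · have hadj : G.Adj v.1.1 v.1.2 := v.2.resolve_left hd
    have hv : v = ve hadj := rfl
    rcases lt_or_gt_of_ne (fun hc => hd hc) with hab | hab
    · rw [hv, aVec_ve_lt z hadj hab]
      have h1 : ve hadj ≠ ve h.symm := fun he => by
        obtain ⟨ha, hb⟩ := (ve_eq_iff hadj h.symm).mp he
        rw [ha, hb] at hab; exact absurd hab (asymm hlt)
      rw [if_neg h1]
      simp only [Pi.sub_apply, Pi.add_apply]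
      rw [Pi.single_eq_of_ne (by simp), Pi.single_eq_of_ne (by simp), Pi.single_apply]
      have hiff : ((Sum.inr (edgeIdx z h) : Fin n ⊕ Fin m) = Sum.inr (edgeIdx z hadj)) ↔
          ((v.1.1 = i ∧ v.1.2 = j) ∨ (v.1.1 = j ∧ v.1.2 = i)) := by
        rw [Sum.inr.injEq, eq_comm, edgeIdx_eq_iff]
      have hno : ¬(v.1.1 = j ∧ v.1.2 = i) := by
        rintro ⟨ha, hb⟩; rw [ha, hb] at hab; exact absurd hab (asymm hlt)
      simp only [hiff, ve_eq_iff]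
      by_cases hcase : v.1.1 = i ∧ v.1.2 = j
      · rw [if_pos (Or.inl hcase), if_pos hcase]; ring
      · rw [if_neg (by tauto), if_neg hcase]; ring
    · rw [hv, aVec_ve_gt z hadj hab]
      have h2 : ve hadj ≠ ve h := fun he => by
        obtain ⟨ha, hb⟩ := (ve_eq_iff hadj h).mp he
        rw [ha, hb] at hab; exact absurd hab (asymm hlt)
      rw [if_neg h2, Pi.single_apply]
      have hiff : ((Sum.inr (edgeIdx z h) : Fin n ⊕ Fin m) = Sum.inr (edgeIdx z hadj)) ↔
          ((v.1.1 = i ∧ v.1.2 = j) ∨ (v.1.1 = j ∧ v.1.2 = i)) := by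
        rw [Sum.inr.injEq, eq_comm, edgeIdx_eq_iff]
      have hno : ¬(v.1.1 = i ∧ v.1.2 = j) := by
        rintro ⟨ha, hb⟩; rw [ha, hb] at hab; exact absurd hab (asymm hlt)
      simp only [hiff, ve_eq_iff]
      by_cases hcase : v.1.1 = j ∧ v.1.2 = i
      · rw [if_pos (Or.inr hcase), if_pos hcase]; ring
      · rw [if_neg (by tauto), if_neg hcase]; ring

lemma aVec_apply_inl_of_diag (v : VarSet n G) (hd : v.1.1 = v.1.2) (i : Fin n) :
    aVec n m G z v (Sum.inl i) = if v = vd G i then 1 else 0 := by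
  rw [show aVec n m G z v = Pi.single (Sum.inl v.1.1) 1 from by rw [aVec, dif_pos hd]]
  rw [Pi.single_apply]
  have hiff : ((Sum.inl i : Fin n ⊕ Fin m) = Sum.inl v.1.1) ↔ (v = vd G i) := by
    rw [Sum.inl.injEq]
    constructor
    · intro hh
      rcases v with ⟨⟨a,b⟩, hab⟩
      simp only at hd hh
      subst hd; subst hh; rfl
    · intro hh; rw [hh]; rfl
  simp only [hiff]

lemma Amap_apply (d : VarSet n G →₀ ℕ) (c : Fin n ⊕ Fin m) :
    Amap z d c = ∑ v ∈ d.support, (d v : ℤ) * aVec n m G z v c := by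
  rw [Amap, Finsupp.sum, Finset.sum_apply]
  simp

lemma Amap_inr (d : VarSet n G →₀ ℕ) {i j : Fin n} (h : G.Adj i j) (hlt : i < j) :
    Amap z d (Sum.inr (edgeIdx z h)) = (d (ve h.symm) : ℤ) - (d (ve h) : ℤ) := by
  rw [Amap_apply]
  rw [Finset.sum_congr rfl (fun v _ => by
    rw [aVec_apply_inr z v h hlt, mul_sub, mul_ite, mul_one, mul_zero, mul_ite, mul_one, mul_zero])]
  rw [Finset.sum_sub_distrib, Finset.sum_ite_eq', Finset.sum_ite_eq']
  have e1 : (if ve h.symm ∈ d.support then ((d (ve h.symm)) : ℤ) else 0) = (d (ve h.symm) : ℤ) := by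
    split_ifs with hh
    · rfl
    · rw [Finsupp.notMem_support_iff.mp hh]; simp
  have e2 : (if ve h ∈ d.support then ((d (ve h)) : ℤ) else 0) = (d (ve h) : ℤ) := by
    split_ifs with hh
    · rfl
    · rw [Finsupp.notMem_support_iff.mp hh]; simp
  rw [e1, e2]

lemma Amap_inl_diag (e : VarSet n G →₀ ℕ) (he : ∀ v ∈ e.support, v.1.1 = v.1.2) (i : Fin n) :
    Amap z e (Sum.inl i) = (e (vd G i) : ℤ) := by
  rw [Amap_apply]
  rw [Finset.sum_congr rfl (fun v hv => by
    rw [aVec_apply_inl_of_diag z v (he v hv) i, mul_ite, mul_one, mul_zero])]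
  rw [Finset.sum_ite_eq']
  split_ifs with h1
  · rfl
  · rw [Finsupp.notMem_support_iff.mp h1]; simp

end C3
section C4
variable {K : Type} [Field K] {n m : ℕ} {G : SimpleGraph (Fin n)} (z : Fin m ≃ G.edgeSet)

/-- A monomial exponent is standard if for each edge one of the two edge variables is absent. -/
def Std (d : VarSet n G →₀ ℕ) : Prop :=
  ∀ (i j : Fin n) (h : G.Adj i j), d (ve h) = 0 ∨ d (ve h.symm) = 0

lemma amap_inj_offdiag {d d' : VarSet n G →₀ ℕ} (hd : Std d) (hd' : Std d')
    (hA : Amap z d = Amap z d') {i j : Fin n} (h : G.Adj i j) : d (ve h) = d' (ve h) := by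
  suffices H : ∀ (i j : Fin n) (h : G.Adj i j), i < j →
      d (ve h) = d' (ve h) ∧ d (ve h.symm) = d' (ve h.symm) by
    rcases lt_or_gt_of_ne h.ne with hlt | hlt
    · exact (H i j h hlt).1
    · have := (H j i h.symm hlt).2
      rwa [ve_symm_symm] at this
  intro i j h hlt
  have hcomp := congrFun hA (Sum.inr (edgeIdx z h))
  rw [Amap_inr z d h hlt, Amap_inr z d' h hlt] at hcomp
  have o1 := hd i j h
  have o2 := hd' i j h
  omega

lemma amap_injOn_std {d d' : VarSet n G →₀ ℕ} (hd : Std d) (hd' : Std d')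
    (hA : Amap z d = Amap z d') : d = d' := by
  classical
  have hoff : ∀ v : VarSet n G, v.1.1 ≠ v.1.2 → d v = d' v := by
    intro v hv
    exact amap_inj_offdiag z hd hd' hA (v.2.resolve_left hv)
  set p : VarSet n G → Prop := fun v => v.1.1 = v.1.2 with hp
  have hfo : d.filter (fun v => ¬ p v) = d'.filter (fun v => ¬ p v) := by
    ext v
    rw [Finsupp.filter_apply, Finsupp.filter_apply]
    by_cases hv : p v
    · rw [if_neg (not_not_intro hv), if_neg (not_not_intro hv)]
    · rw [if_pos hv, if_pos hv]; exact hoff v hv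
  have hdec : d.filter p + d.filter (fun v => ¬ p v) = d :=
    Finsupp.filter_pos_add_filter_neg d p
  have hdec' : d'.filter p + d'.filter (fun v => ¬ p v) = d' :=
    Finsupp.filter_pos_add_filter_neg d' p
  have h1 : Amap z (d.filter p) + Amap z (d.filter fun v => ¬ p v) = Amap z d := by
    rw [← Amap_add, hdec]
  have h2 : Amap z (d'.filter p) + Amap z (d'.filter fun v => ¬ p v) = Amap z d' := by
    rw [← Amap_add, hdec']
  have hAdiag : Amap z (d.filter p) = Amap z (d'.filter p) := by
    rw [hfo] at h1
    rw [hA] at h1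
    have := h1.trans h2.symm
    exact add_right_cancel this
  have hsupp : ∀ v ∈ (d.filter p).support, v.1.1 = v.1.2 := by
    intro v hv
    rw [Finsupp.support_filter, Finset.mem_filter] at hv
    exact hv.2
  have hsupp' : ∀ v ∈ (d'.filter p).support, v.1.1 = v.1.2 := by
    intro v hv
    rw [Finsupp.support_filter, Finset.mem_filter] at hv
    exact hv.2
  have hdiag : ∀ i : Fin n, d (vd G i) = d' (vd G i) := by
    intro i
    have hc := congrFun hAdiag (Sum.inl i)
    rw [Amap_inl_diag z _ hsupp i, Amap_inl_diag z _ hsupp' i] at hc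
    have hc2 : (d.filter p) (vd G i) = (d'.filter p) (vd G i) := Nat.cast_inj.mp hc
    rwa [Finsupp.filter_apply, if_pos (show p (vd G i) from rfl), Finsupp.filter_apply, if_pos (show p (vd G i) from rfl)] at hc2
  ext v
  by_cases hv : v.1.1 = v.1.2
  · have hveq : v = vd G v.1.1 := Subtype.ext (Prod.ext rfl hv.symm)
    rw [hveq]; exact hdiag _
  · exact hoff v hv

end C4
section C5
variable {K : Type} [Field K] {n m : ℕ} {G : SimpleGraph (Fin n)} (z : Fin m ≃ G.edgeSet)

/-- The total degree in the off-diagonal variables. -/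
def wt (d : VarSet n G →₀ ℕ) : ℕ :=
  d.sum fun v k => if v.1.1 = v.1.2 then 0 else k

lemma wt_add (a b : VarSet n G →₀ ℕ) : wt (a + b) = wt a + wt b :=
  Finsupp.sum_add_index' (fun v => by simp) (fun v k l => by split <;> simp)

lemma wt_single (v : VarSet n G) (k : ℕ) :
    wt (Finsupp.single v k) = if v.1.1 = v.1.2 then 0 else k :=
  Finsupp.sum_single_index (by simp)

lemma le_wt (d : VarSet n G →₀ ℕ) (v : VarSet n G) (hv : v.1.1 ≠ v.1.2) : d v ≤ wt d := by
  by_cases hmem : v ∈ d.support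
  · have hle : (if v.1.1 = v.1.2 then 0 else d v) ≤ wt d :=
      Finset.single_le_sum (f := fun v : VarSet n G => if v.1.1 = v.1.2 then 0 else d v)
        (fun _ _ => Nat.zero_le _) hmem
    rwa [if_neg hv] at hle
  · rw [Finsupp.notMem_support_iff.mp hmem]; exact Nat.zero_le _

lemma X_mul_X_eq (v w : VarSet n G) :
    (X v * X w : MvPolynomial (VarSet n G) K) =
      monomial (Finsupp.single v 1 + Finsupp.single w 1) 1 := by
  rw [show (X v : MvPolynomial (VarSet n G) K) = monomial (Finsupp.single v 1) 1 from rfl,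
    show (X w : MvPolynomial (VarSet n G) K) = monomial (Finsupp.single w 1) 1 from rfl,
    monomial_mul, one_mul]

lemma step {i j : Fin n} (h : G.Adj i j) (hlt : i < j) (d : VarSet n G →₀ ℕ)
    (h1 : d (ve h) ≠ 0) (h2 : d (ve h.symm) ≠ 0) :
    ∃ d₁ : VarSet n G →₀ ℕ, wt d₁ + 2 = wt d ∧
      (monomial d (1:K) - monomial d₁ 1) ∈ PG K n G := by
  classical
  have hij : i ≠ j := h.ne
  have hne : ve h ≠ ve h.symm := fun he => hij ((ve_eq_iff h h.symm).mp he).1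
  have hne' : ¬ (ve h.symm = ve h) := fun he => hne he.symm
  have hv1 : 1 ≤ d (ve h) := Nat.one_le_iff_ne_zero.mpr h1
  have hv2 : 1 ≤ d (ve h.symm) := Nat.one_le_iff_ne_zero.mpr h2
  set d₀ : VarSet n G →₀ ℕ :=
    d - Finsupp.single (ve h) 1 - Finsupp.single (ve h.symm) 1 with hd₀
  have hd : d = d₀ + (Finsupp.single (ve h) 1 + Finsupp.single (ve h.symm) 1) := by
    ext v
    simp only [hd₀, Finsupp.add_apply, Finsupp.tsub_apply, Finsupp.single_apply]
    by_cases e1 : ve h = v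
    · subst e1
      simp [hne']
      omega
    · by_cases e2 : ve h.symm = v
      · subst e2
        simp [hne]
        omega
      · simp [e1, e2]
  set d₁ : VarSet n G →₀ ℕ :=
    d₀ + (Finsupp.single (vd G i) 1 + Finsupp.single (vd G j) 1) with hd₁
  have key : monomial d (1:K) - monomial d₁ 1 = -(monomial d₀ 1 * fij K h) := by
    rw [fij]
    rw [show (X ⟨(i, i), Or.inl rfl⟩ : MvPolynomial (VarSet n G) K) = X (vd G i) from rfl,
      show (X ⟨(j, j), Or.inl rfl⟩ : MvPolynomial (VarSet n G) K) = X (vd G j) from rfl,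
      show (X ⟨(i, j), Or.inr h⟩ : MvPolynomial (VarSet n G) K) = X (ve h) from rfl,
      show (X ⟨(j, i), Or.inr h.symm⟩ : MvPolynomial (VarSet n G) K) = X (ve h.symm) from rfl]
    rw [X_mul_X_eq, X_mul_X_eq, mul_sub, monomial_mul, monomial_mul, one_mul]
    rw [← hd₁, ← hd]
    rw [neg_sub]
  refine ⟨d₁, ?_, ?_⟩
  · have hwd : wt d = wt d₀ + 2 := by
      rw [hd, wt_add, wt_add, wt_single, wt_single]
      rw [if_neg (show ¬((ve h : VarSet n G)).1.1 = ((ve h : VarSet n G)).1.2 from hij),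
        if_neg (show ¬((ve h.symm : VarSet n G)).1.1 = ((ve h.symm : VarSet n G)).1.2
          from fun hc => hij hc.symm)]
    have hwd₁ : wt d₁ = wt d₀ := by
      rw [hd₁, wt_add, wt_add, wt_single, wt_single,
        if_pos (show ((vd G i : VarSet n G)).1.1 = ((vd G i : VarSet n G)).1.2 from rfl),
        if_pos (show ((vd G j : VarSet n G)).1.1 = ((vd G j : VarSet n G)).1.2 from rfl)]
      omega
    omega
  · rw [key]
    exact neg_mem (Ideal.mul_mem_left _ _ (Ideal.subset_span ⟨i, j, h, hlt, rfl⟩))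

lemma reduce : ∀ (N : ℕ) (d : VarSet n G →₀ ℕ), wt d ≤ N →
    ∃ d', Std d' ∧ (monomial d (1:K) - monomial d' 1) ∈ PG K n G := by
  intro N
  induction N with
  | zero =>
    intro d hw
    refine ⟨d, ?_, by simp⟩
    intro i j h
    left
    have := le_wt d (ve h) (show ((ve h : VarSet n G)).1.1 ≠ ((ve h : VarSet n G)).1.2 from h.ne)
    omega
  | succ N IH =>
    intro d hw
    by_cases hstd : Std d
    · exact ⟨d, hstd, by simp⟩
    · rw [Std] at hstd; push_neg at hstd
      obtain ⟨i, j, h, h1, h2⟩ := hstd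
      have hstep : ∃ d₁ : VarSet n G →₀ ℕ, wt d₁ + 2 = wt d ∧
          (monomial d (1:K) - monomial d₁ 1) ∈ PG K n G := by
        rcases lt_or_gt_of_ne h.ne with hlt | hlt
        · exact step h hlt d h1 h2
        · exact step h.symm hlt d h2 (by rwa [ve_symm_symm])
      obtain ⟨d₁, hwt2, hmem⟩ := hstep
      obtain ⟨d', hstd', hmem'⟩ := IH d₁ (by omega)
      refine ⟨d', hstd', ?_⟩
      have hadd := Ideal.add_mem _ hmem hmem'
      rwa [sub_add_sub_cancel] at hadd

end C5
section C6
variable {K : Type} [Field K] {n m : ℕ} {G : SimpleGraph (Fin n)} (z : Fin m ≃ G.edgeSet)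

lemma phi_X (v : VarSet n G) :
    phiMap K n m G z (X v) = AddMonoidAlgebra.single (aVec n m G z v) 1 :=
  aeval_X _ v

lemma PG_le_ker : PG K n G ≤ RingHom.ker (phiMap K n m G z).toRingHom := by
  rw [PG, Ideal.span_le]
  rintro f ⟨i, j, h, hlt, rfl⟩
  simp only [SetLike.mem_coe, RingHom.mem_ker, AlgHom.toRingHom_eq_coe, RingHom.coe_coe]
  rw [fij]
  rw [show (⟨(i, i), Or.inl rfl⟩ : VarSet n G) = vd G i from rfl,
    show (⟨(j, j), Or.inl rfl⟩ : VarSet n G) = vd G j from rfl,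
    show (⟨(i, j), Or.inr h⟩ : VarSet n G) = ve h from rfl,
    show (⟨(j, i), Or.inr h.symm⟩ : VarSet n G) = ve h.symm from rfl]
  rw [map_sub, map_mul, map_mul, phi_X, phi_X, phi_X, phi_X,
    AddMonoidAlgebra.single_mul_single, AddMonoidAlgebra.single_mul_single, one_mul]
  rw [aVec_vd, aVec_vd, aVec_ve_lt z h hlt, aVec_ve_gt z h.symm hlt, edgeIdx_symm z h]
  rw [sub_eq_zero]
  congr 1
  abel

lemma std_ker_eq_zero (g : MvPolynomial (VarSet n G) K)
    (hstd : ∀ e ∈ g.support, Std e) (hker : phiMap K n m G z g = 0) : g = 0 := by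
  by_contra hg
  obtain ⟨e₀, he₀⟩ := support_nonempty.mpr hg
  have hrep : phiMap K n m G z g =
      ∑ e ∈ g.support, AddMonoidAlgebra.single (Amap z e) (coeff e g) := by
    conv_lhs => rw [g.as_sum]
    rw [map_sum]
    exact Finset.sum_congr rfl (fun e _ => phi_monomial z e _)
  rw [hrep] at hker
  have hker' : (∑ e ∈ g.support, Finsupp.single (Amap z e) (coeff e g) :
      ((Fin n ⊕ Fin m) → ℤ) →₀ K) = 0 := by
    rw [← AddMonoidAlgebra.ofCoeff_eq_zero, AddMonoidAlgebra.ofCoeff_sum]; exact hker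
  have happ := DFunLike.congr_fun hker' (Amap z e₀)
  rw [Finset.sum_apply'] at happ
  have hterms : ∀ e ∈ g.support,
      (Finsupp.single (Amap z e) (coeff e g)) (Amap z e₀) =
        if e = e₀ then coeff e g else 0 := by
    intro e he
    rw [Finsupp.single_apply]
    by_cases hc : e = e₀
    · rw [if_pos hc, if_pos (by rw [hc])]
    · rw [if_neg hc, if_neg (fun hc2 => hc (amap_injOn_std z (hstd e he) (hstd e₀ he₀) hc2))]
  rw [Finset.sum_congr rfl hterms, Finset.sum_ite_eq'] at happ
  rw [if_pos he₀] at happ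
  exact (mem_support_iff.mp he₀) happ

lemma ker_le_PG : RingHom.ker (phiMap K n m G z).toRingHom ≤ PG K n G := by
  classical
  intro f hf
  have hred := fun d : VarSet n G →₀ ℕ => reduce (K := K) (wt d) d le_rfl
  choose r hrstd hrmem using hred
  set g : MvPolynomial (VarSet n G) K := ∑ d ∈ f.support, monomial (r d) (coeff d f) with hg
  have hfg : f - g ∈ PG K n G := by
    have hsplit : f - g = ∑ d ∈ f.support,
        (monomial d (coeff d f) - monomial (r d) (coeff d f)) := by
      rw [Finset.sum_sub_distrib, ← hg, ← f.as_sum]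
    rw [hsplit]
    refine Ideal.sum_mem _ (fun d hd => ?_)
    have hfac : monomial d (coeff d f) - monomial (r d) (coeff d f) =
        C (coeff d f) * (monomial d 1 - monomial (r d) 1) := by
      simp [mul_sub, C_mul_monomial]
    rw [hfac]
    exact Ideal.mul_mem_left _ _ (hrmem d)
  have hfker : phiMap K n m G z f = 0 := by
    rw [RingHom.mem_ker] at hf
    simpa using hf
  have hfgker : phiMap K n m G z (f - g) = 0 := by
    have := PG_le_ker z hfg
    rw [RingHom.mem_ker] at this
    simpa using this
  have hgker : phiMap K n m G z g = 0 := by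
    have := map_sub (phiMap K n m G z) f g
    rw [hfker, hfgker] at this
    rw [zero_sub] at this
    exact neg_eq_zero.mp this.symm
  have hgstd : ∀ e ∈ g.support, Std e := by
    intro e he
    rw [hg] at he
    have := support_sum he
    rw [Finset.mem_biUnion] at this
    obtain ⟨d, hd, hed⟩ := this
    have hmem : e ∈ ({r d} : Finset _) := support_monomial_subset hed
    rw [Finset.mem_singleton] at hmem
    rw [hmem]
    exact hrstd d
  have hg0 : g = 0 := std_ker_eq_zero z g hgstd hgker
  have : f = f - g := by rw [hg0, sub_zero]
  rw [this]
  exact hfg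

end C6
end PGAux


/-- `P_G` coincides with the toric ideal `I_{A_G}`, the kernel of `φ`. -/
theorem PG_eq_toric_ideal (K : Type) [Field K] (n m : ℕ) (G : SimpleGraph (Fin n))
    (z : Fin m ≃ G.edgeSet) :
    PG K n G = RingHom.ker (phiMap K n m G z).toRingHom := by
  exact le_antisymm (PGAux.PG_le_ker z) (PGAux.ker_le_PG z)
end

section
/- Let G be a finite simple graph on the vertex set {1,…,n}. For every edge {i,j} of G with i<j, the monomials x_{ii}x_{jj} and x_{ij}x_{ji} are indispensable monomials of P_G: every set of binomials that generates the ideal P_G contains a binomial one of whose two monomials is x_{ii}x_{jj}, and also contains a binomial one of whose two monomials is x_{ij}x_{ji}. -/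
open MvPolynomial

/-- `f` is a binomial: a difference `x^u - x^v` of two distinct monomials. -/
def IsBinomial (K : Type) [Field K] {σ : Type} (f : MvPolynomial σ K) : Prop :=
  ∃ u v : σ →₀ ℕ, u ≠ v ∧ f = monomial u 1 - monomial v 1

/-- `M` is one of the two monomials of the binomial `f`. -/
def IsMonomialOf (K : Type) [Field K] {σ : Type} (M f : MvPolynomial σ K) : Prop :=
  ∃ u v : σ →₀ ℕ, u ≠ v ∧ f = monomial u 1 - monomial v 1 ∧
    (M = monomial u 1 ∨ M = monomial v 1)

namespace Indisp

open Finsupp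

variable {n : ℕ} {G : SimpleGraph (Fin n)}

/-- The multidegree of a variable. -/
noncomputable def dvar (p : VarSet n G) : Fin n →₀ ℕ :=
  Finsupp.single p.1.1 1 + Finsupp.single p.1.2 1

/-- The multidegree of an exponent vector. -/
noncomputable def deg (u : VarSet n G →₀ ℕ) : Fin n →₀ ℕ :=
  u.sum fun p m => m • dvar p

lemma deg_zero : deg (0 : VarSet n G →₀ ℕ) = 0 := Finsupp.sum_zero_index

lemma deg_single (p : VarSet n G) (m : ℕ) : deg (Finsupp.single p m) = m • dvar p :=
  Finsupp.sum_single_index (zero_smul _ _)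

lemma deg_apply (u : VarSet n G →₀ ℕ) (k : Fin n) :
    deg u k = ∑ p ∈ u.support, u p * dvar p k := by
  rw [deg, Finsupp.sum_apply, Finsupp.sum]
  exact Finset.sum_congr rfl fun p _ => by simp

lemma le_deg {u : VarSet n G →₀ ℕ} {p : VarSet n G} (hp : p ∈ u.support) (k : Fin n) :
    u p * dvar p k ≤ deg u k := by
  rw [deg_apply]
  exact Finset.single_le_sum (f := fun p => u p * dvar p k) (fun _ _ => Nat.zero_le _) hp

lemma one_le_dvar_fst (p : VarSet n G) : 1 ≤ dvar p p.1.1 := by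
  rw [dvar, Finsupp.add_apply, Finsupp.single_apply, if_pos rfl]
  omega

lemma one_le_dvar_snd (p : VarSet n G) : 1 ≤ dvar p p.1.2 := by
  rw [dvar, Finsupp.add_apply]
  rw [Finsupp.single_apply (a := p.1.2) (b := (1:ℕ)), if_pos rfl]
  omega

lemma deg_fst_pos {u : VarSet n G →₀ ℕ} {p : VarSet n G} (hp : p ∈ u.support) :
    1 ≤ deg u p.1.1 := by
  have h1 : 1 ≤ u p := Nat.one_le_iff_ne_zero.mpr (Finsupp.mem_support_iff.mp hp)
  calc 1 ≤ u p * dvar p p.1.1 := Nat.one_le_iff_ne_zero.mpr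
        (Nat.mul_ne_zero (by omega) (by have := one_le_dvar_fst p; omega))
    _ ≤ deg u p.1.1 := le_deg hp _

lemma deg_snd_pos {u : VarSet n G →₀ ℕ} {p : VarSet n G} (hp : p ∈ u.support) :
    1 ≤ deg u p.1.2 := by
  have h1 : 1 ≤ u p := Nat.one_le_iff_ne_zero.mpr (Finsupp.mem_support_iff.mp hp)
  calc 1 ≤ u p * dvar p p.1.2 := Nat.one_le_iff_ne_zero.mpr
        (Nat.mul_ne_zero (by omega) (by have := one_le_dvar_snd p; omega))
    _ ≤ deg u p.1.2 := le_deg hp _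

lemma deg_eq_zero {u : VarSet n G →₀ ℕ} (h : deg u = 0) : u = 0 := by
  by_contra hu
  obtain ⟨p, hp⟩ := Finsupp.support_nonempty_iff.mpr hu
  have := deg_fst_pos hp
  rw [h] at this
  simp at this

/-- If `deg u = 2 eᵢ` then `u` is the exponent of `x_{ii}`. -/
lemma eq_single_diag {u : VarSet n G →₀ ℕ} {i : Fin n} {a : VarSet n G} (ha : a.1 = (i, i))
    (h : deg u = Finsupp.single i 2) : u = Finsupp.single a 1 := by
  have hsub : u.support ⊆ {a} := by
    intro p hp
    have h1 : p.1.1 = i := by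
      have h2 := deg_fst_pos hp
      rw [h, Finsupp.single_apply] at h2
      by_contra hne
      rw [if_neg (fun hc => hne hc.symm)] at h2
      omega
    have h2 : p.1.2 = i := by
      have h2 := deg_snd_pos hp
      rw [h, Finsupp.single_apply] at h2
      by_contra hne
      rw [if_neg (fun hc => hne hc.symm)] at h2
      omega
    have : p.1 = a.1 := by rw [ha]; exact Prod.ext h1 h2
    simp [Subtype.ext this]
  have hu : u = Finsupp.single a (u a) := Finsupp.support_subset_singleton.mp hsub
  have hdv : dvar a i = 2 := by
    rw [dvar, Finsupp.add_apply, ha]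
    simp [Finsupp.single_apply]
  have h2 : deg u i = 2 := by rw [h, Finsupp.single_apply, if_pos rfl]
  rw [hu, deg_single, Finsupp.smul_apply, smul_eq_mul, hdv] at h2
  have : u a = 1 := by omega
  rw [hu, this]

/-- If `deg u = eᵢ + eⱼ`, `i ≠ j`, then `u` is the exponent of `x_{ij}` or of `x_{ji}`. -/
lemma eq_single_offdiag {u : VarSet n G →₀ ℕ} {i j : Fin n} (hij : i ≠ j)
    (h : deg u = Finsupp.single i 1 + Finsupp.single j 1) :
    ∃ p : VarSet n G, u = Finsupp.single p 1 ∧ (p.1 = (i, j) ∨ p.1 = (j, i)) := by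
  have hei : (Finsupp.single i 1 + Finsupp.single j 1 : Fin n →₀ ℕ) i = 1 := by
    simp [Finsupp.single_apply, hij.symm]
  have hej : (Finsupp.single i 1 + Finsupp.single j 1 : Fin n →₀ ℕ) j = 1 := by
    simp [Finsupp.single_apply, hij]
  have key : ∀ p ∈ u.support, p.1 = (i, j) ∨ p.1 = (j, i) := by
    intro p hp
    have hup : 1 ≤ u p := Nat.one_le_iff_ne_zero.mpr (Finsupp.mem_support_iff.mp hp)
    have hmem : ∀ k : Fin n, deg u k ≠ 0 → k = i ∨ k = j := by
      intro k hk
      rw [h, Finsupp.add_apply, Finsupp.single_apply, Finsupp.single_apply] at hk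
      by_contra hc
      push_neg at hc
      rw [if_neg (fun hh => hc.1 hh.symm), if_neg (fun hh => hc.2 hh.symm)] at hk
      omega
    have h1 := hmem p.1.1 (by have := deg_fst_pos hp; omega)
    have h2 := hmem p.1.2 (by have := deg_snd_pos hp; omega)
    have hne : p.1.1 ≠ p.1.2 := by
      intro heq
      have hdv : 2 ≤ dvar p p.1.1 := by
        rw [dvar, Finsupp.add_apply, Finsupp.single_apply, if_pos rfl,
          Finsupp.single_apply, ← heq, if_pos rfl]
      have hle := le_deg hp p.1.1
      have hub : deg u p.1.1 ≤ 1 := by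
        rw [h]
        rcases h1 with h1 | h1 <;> rw [h1]
        · omega
        · omega
      nlinarith
    rcases h1 with h1 | h1 <;> rcases h2 with h2 | h2
    · exact absurd (h1.trans h2.symm) hne
    · exact Or.inl (Prod.ext h1 h2)
    · exact Or.inr (Prod.ext h1 h2)
    · exact absurd (h1.trans h2.symm) hne
  have hdvi : ∀ p ∈ u.support, dvar p i = 1 := by
    intro p hp
    rcases key p hp with hk | hk <;>
      · rw [dvar, hk]
        simp [Finsupp.single_apply, hij, hij.symm]
  have hsum : ∑ p ∈ u.support, u p = 1 := by
    have h1 : deg u i = ∑ p ∈ u.support, u p * dvar p i := deg_apply u i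
    have h2 : ∑ p ∈ u.support, u p * dvar p i = ∑ p ∈ u.support, u p :=
      Finset.sum_congr rfl fun p hp => by rw [hdvi p hp, mul_one]
    rw [← h2, ← h1, h, hei]
  have hpos : ∀ p ∈ u.support, 1 ≤ u p :=
    fun p hp => Nat.one_le_iff_ne_zero.mpr (Finsupp.mem_support_iff.mp hp)
  have hcard : u.support.card ≤ 1 := by
    have := Finset.card_nsmul_le_sum u.support u 1 hpos
    simpa [hsum] using this
  have hne0 : u.support.Nonempty := by
    rcases Finset.eq_empty_or_nonempty u.support with he | hne
    · rw [he] at hsum; simp at hsum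
    · exact hne
  obtain ⟨p, hps⟩ := Finset.card_eq_one.mp (le_antisymm hcard (Finset.card_pos.mpr hne0))
  have hu : u = Finsupp.single p (u p) :=
    Finsupp.support_subset_singleton.mp (by rw [hps])
  have hup : u p = 1 := by
    rw [hps, Finset.sum_singleton] at hsum; exact hsum
  exact ⟨p, by rw [hu, hup], key p (by rw [hps]; exact Finset.mem_singleton_self p)⟩

variable (K : Type) [Field K]

lemma X_eq_monomial (c : VarSet n G) :
    (X c : MvPolynomial (VarSet n G) K) = monomial (Finsupp.single c 1) 1 := by
  rw [← pow_one (X c), X_pow_eq_monomial]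

lemma monomial_prod {α : Type} (s : Finset α) (d : α → (Fin n →₀ ℕ)) :
    (∏ p ∈ s, monomial (d p) (1 : K)) = monomial (∑ p ∈ s, d p) 1 := by
  classical
  induction s using Finset.cons_induction with
  | empty => simp
  | cons a s ha ih => rw [Finset.prod_cons, Finset.sum_cons, ih, monomial_mul, one_mul]

lemma aeval_mono (u : VarSet n G →₀ ℕ) :
    aeval (fun p : VarSet n G => (X p.1.1 * X p.1.2 : MvPolynomial (Fin n) K))
      (monomial u (1 : K)) = monomial (deg u) 1 := by
  rw [aeval_monomial, map_one, one_mul]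
  have hXX : ∀ p : VarSet n G, (X p.1.1 * X p.1.2 : MvPolynomial (Fin n) K)
      = monomial (dvar p) 1 := by
    intro p
    rw [← pow_one (X p.1.1 : MvPolynomial (Fin n) K), X_pow_eq_monomial,
      ← pow_one (X p.1.2 : MvPolynomial (Fin n) K), X_pow_eq_monomial, monomial_mul, one_mul,
      dvar]
  rw [Finsupp.prod]
  calc (∏ p ∈ u.support, (X p.1.1 * X p.1.2 : MvPolynomial (Fin n) K) ^ u p)
      = ∏ p ∈ u.support, monomial (u p • dvar p) (1 : K) := by
        refine Finset.prod_congr rfl fun p _ => ?_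
        rw [hXX, monomial_pow, one_pow]
    _ = monomial (∑ p ∈ u.support, u p • dvar p) 1 := monomial_prod K _ _
    _ = monomial (deg u) 1 := by rw [deg, Finsupp.sum]

lemma PG_le_ker {A : Type} [CommRing A] [Algebra K A]
    (φ : MvPolynomial (VarSet n G) K →ₐ[K] A)
    (h : ∀ (i j : Fin n) (hadj : G.Adj i j), φ (fij K hadj) = 0) :
    ∀ f ∈ PG K n G, φ f = 0 := by
  intro f hf
  have hle : PG K n G ≤ RingHom.ker φ.toRingHom := by
    rw [PG, Ideal.span_le]
    rintro x ⟨i, j, hadj, hij, rfl⟩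
    exact h i j hadj
  exact hle hf

lemma deg_eq_of_mem {u v : VarSet n G →₀ ℕ}
    (h : monomial u (1 : K) - monomial v 1 ∈ PG K n G) : deg u = deg v := by
  have h0 := PG_le_ker K
    (aeval (fun p : VarSet n G => (X p.1.1 * X p.1.2 : MvPolynomial (Fin n) K)))
    (by
      intro i' j' hadj
      rw [fij]
      simp only [map_sub, map_mul, aeval_X]
      ring) _ h
  rw [map_sub, aeval_mono, aeval_mono, sub_eq_zero] at h0
  by_contra hne
  have := congrArg (coeff (deg u)) h0
  rw [coeff_monomial, coeff_monomial, if_pos rfl, if_neg (fun hh => hne hh.symm)] at this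
  simp at this

/-- A binomial `X c - X d` with `c.1.1 ≠ d.1.1` is not in `P_G`. -/
lemma X_sub_X_notMem {c d : VarSet n G} (hcd : c.1.1 ≠ d.1.1) :
    monomial (Finsupp.single c 1) (1 : K) - monomial (Finsupp.single d 1) 1 ∉ PG K n G := by
  intro h
  have h0 := PG_le_ker K
    (aeval (fun p : VarSet n G => (X p.1.1 : MvPolynomial (Fin n) K)))
    (by
      intro i' j' hadj
      rw [fij]
      simp only [map_sub, map_mul, aeval_X]
      ring) _ h
  rw [← X_eq_monomial, ← X_eq_monomial, map_sub, aeval_X, aeval_X, sub_eq_zero] at h0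
  exact hcd (X_injective h0)

lemma coeff_bin {u v' x : VarSet n G →₀ ℕ} (h : coeff x ((monomial u (1:K)) - monomial v' 1) ≠ 0) :
    x = u ∨ x = v' := by
  by_contra hx
  push_neg at hx
  rw [coeff_sub, coeff_monomial, coeff_monomial, if_neg (fun hh => hx.1 hh.symm),
    if_neg (fun hh => hx.2 hh.symm), sub_zero] at h
  exact h rfl

lemma extract {F : Set (MvPolynomial (VarSet n G) K)} {p : MvPolynomial (VarSet n G) K}
    (hp : p ∈ Ideal.span F) {u₀ : VarSet n G →₀ ℕ} (hc : coeff u₀ p ≠ 0) :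
    ∃ g ∈ F, ∃ w v : VarSet n G →₀ ℕ, w + v = u₀ ∧ coeff v g ≠ 0 := by
  have hp' : p ∈ Submodule.span (MvPolynomial (VarSet n G) K) F := hp
  obtain ⟨c, hcs, rfl⟩ := Submodule.mem_span_set.mp hp'
  rw [Finsupp.sum, coeff_sum] at hc
  obtain ⟨g, hg, hne⟩ := Finset.exists_ne_zero_of_sum_ne_zero hc
  rw [smul_eq_mul, coeff_mul] at hne
  obtain ⟨x, hx, hxne⟩ := Finset.exists_ne_zero_of_sum_ne_zero hne
  refine ⟨g, hcs hg, x.1, x.2, Finset.HasAntidiagonal.mem_antidiagonal.mp hx, fun h0 => hxne ?_⟩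
  rw [h0, mul_zero]

/-- Divisors of a squarefree quadratic monomial. -/
lemma div_cases {a b : VarSet n G} (hab : a ≠ b) {w v : VarSet n G →₀ ℕ}
    (h : w + v = Finsupp.single a 1 + Finsupp.single b 1) :
    v = 0 ∨ v = Finsupp.single a 1 ∨ v = Finsupp.single b 1 ∨
      v = Finsupp.single a 1 + Finsupp.single b 1 := by
  classical
  have hv : ∀ c, v c ≤ (Finsupp.single a 1 + Finsupp.single b 1 : VarSet n G →₀ ℕ) c := by
    intro c
    rw [← h, Finsupp.add_apply]
    omega
  have hva : v a ≤ 1 := by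
    have := hv a
    rw [Finsupp.add_apply, Finsupp.single_apply, if_pos rfl,
      Finsupp.single_apply, if_neg hab.symm] at this
    omega
  have hvb : v b ≤ 1 := by
    have := hv b
    rw [Finsupp.add_apply, Finsupp.single_apply, if_neg hab,
      Finsupp.single_apply, if_pos rfl] at this
    omega
  have hrep : v = Finsupp.single a (v a) + Finsupp.single b (v b) := by
    ext c
    have hvc := hv c
    rw [Finsupp.add_apply, Finsupp.single_apply, Finsupp.single_apply] at hvc ⊢
    split_ifs at hvc ⊢ with h1 h2 h2
    · exact absurd (h1.trans h2.symm) hab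
    · subst h1; omega
    · subst h2; omega
    · omega
  interval_cases h1 : v a <;> interval_cases h2 : v b <;> simp [hrep]

end Indisp

open Indisp Finsupp in
theorem indispensable_monomials (K : Type) [Field K] (n : ℕ) (G : SimpleGraph (Fin n))
    (F : Set (MvPolynomial (VarSet n G) K)) (hbin : ∀ f ∈ F, IsBinomial K f)
    (hgen : Ideal.span F = PG K n G)
    (i j : Fin n) (hij : i < j) (hadj : G.Adj i j) :
    (∃ f ∈ F, IsMonomialOf K (X ⟨(i, i), Or.inl rfl⟩ * X ⟨(j, j), Or.inl rfl⟩) f) ∧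
    (∃ f ∈ F, IsMonomialOf K (X ⟨(i, j), Or.inr hadj⟩ * X ⟨(j, i), Or.inr hadj.symm⟩) f) := by
  classical
  have hij' : i ≠ j := ne_of_lt hij
  set a : VarSet n G := ⟨(i, i), Or.inl rfl⟩ with ha
  set b : VarSet n G := ⟨(j, j), Or.inl rfl⟩ with hb
  set a' : VarSet n G := ⟨(i, j), Or.inr hadj⟩ with ha'
  set b' : VarSet n G := ⟨(j, i), Or.inr hadj.symm⟩ with hb'
  have hab : a ≠ b := by
    intro h
    rw [Subtype.mk.injEq, Prod.mk.injEq] at h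
    exact hij' h.1
  have ha'b' : a' ≠ b' := by
    intro h
    rw [Subtype.mk.injEq, Prod.mk.injEq] at h
    exact hij' h.1
  have haa' : a ≠ a' := by
    intro h
    rw [Subtype.mk.injEq, Prod.mk.injEq] at h
    exact hij' h.2
  have hab' : a ≠ b' := by
    intro h
    rw [Subtype.mk.injEq, Prod.mk.injEq] at h
    exact hij' h.1
  have ha'a : a' ≠ a := haa'.symm
  -- binomial form of fij
  have hfij : fij K hadj =
      monomial (Finsupp.single a 1 + Finsupp.single b 1) (1 : K) -
      monomial (Finsupp.single a' 1 + Finsupp.single b' 1) 1 := by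
    rw [fij, X_eq_monomial, X_eq_monomial, X_eq_monomial, X_eq_monomial,
      monomial_mul, monomial_mul, one_mul]
  have hu01 : (Finsupp.single a 1 + Finsupp.single b 1 : VarSet n G →₀ ℕ) ≠
      Finsupp.single a' 1 + Finsupp.single b' 1 := by
    intro h
    have := DFunLike.congr_fun h a
    rw [Finsupp.add_apply, Finsupp.add_apply, Finsupp.single_apply, if_pos rfl,
      Finsupp.single_apply, if_neg (fun hh => hab hh.symm),
      Finsupp.single_apply, if_neg ha'a,
      Finsupp.single_apply, if_neg (fun hh => hab' hh.symm)] at this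
    omega
  have hspan : fij K hadj ∈ Ideal.span F := by
    rw [hgen, PG]
    exact Ideal.subset_span ⟨i, j, hadj, hij, rfl⟩
  -- degree facts
  have hdva : dvar a = Finsupp.single i 2 := by
    rw [dvar]
    show Finsupp.single i 1 + Finsupp.single i 1 = _
    rw [← Finsupp.single_add]
  have hdvb : dvar b = Finsupp.single j 2 := by
    rw [dvar]
    show Finsupp.single j 1 + Finsupp.single j 1 = _
    rw [← Finsupp.single_add]
  have hdva' : dvar a' = Finsupp.single i 1 + Finsupp.single j 1 := rfl
  constructor
  · -- Part 1 : x_{ii} x_{jj}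
    have hcne : coeff (Finsupp.single a 1 + Finsupp.single b 1) (fij K hadj) ≠ 0 := by
      rw [hfij, coeff_sub, coeff_monomial, coeff_monomial, if_pos rfl,
        if_neg (Ne.symm hu01), sub_zero]
      exact one_ne_zero
    obtain ⟨g, hgF, w, v, hwv, hv⟩ := extract K hspan hcne
    obtain ⟨u, v', huv', hg⟩ := hbin g hgF
    have hvmem : v = u ∨ v = v' := coeff_bin K (by rw [← hg]; exact hv)
    have hgPG : g ∈ PG K n G := hgen ▸ Ideal.subset_span hgF
    have hdeg : deg u = deg v' := deg_eq_of_mem K (hg ▸ hgPG)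
    rcases div_cases hab hwv with h0 | hA | hB | hAB
    · -- v = 0 : impossible
      exfalso
      rcases hvmem with hvm | hvm
      · have hv'0 : v' = 0 := deg_eq_zero (by rw [← hdeg, ← hvm, h0, deg_zero])
        exact huv' ((hvm.symm.trans h0).trans hv'0.symm)
      · have hu0 : u = 0 := deg_eq_zero (by rw [hdeg, ← hvm, h0, deg_zero])
        exact huv' (hu0.trans (h0.symm.trans hvm))
    · -- v = single a 1 : impossible
      exfalso
      have hdv : deg (Finsupp.single a 1) = Finsupp.single i 2 := by
        rw [deg_single, one_smul, hdva]
      rcases hvmem with hvm | hvm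
      · have hv' : v' = Finsupp.single a 1 :=
          eq_single_diag (a := a) (show a.1 = (i, i) from rfl)
            (by rw [← hdeg, ← hvm, hA, hdv])
        exact huv' ((hvm.symm.trans hA).trans hv'.symm)
      · have hu : u = Finsupp.single a 1 :=
          eq_single_diag (a := a) (show a.1 = (i, i) from rfl)
            (by rw [hdeg, ← hvm, hA, hdv])
        exact huv' (hu.trans (hA.symm.trans hvm))
    · -- v = single b 1 : impossible
      exfalso
      have hdv : deg (Finsupp.single b 1) = Finsupp.single j 2 := by
        rw [deg_single, one_smul, hdvb]
      rcases hvmem with hvm | hvm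
      · have hv' : v' = Finsupp.single b 1 :=
          eq_single_diag (a := b) (show b.1 = (j, j) from rfl)
            (by rw [← hdeg, ← hvm, hB, hdv])
        exact huv' ((hvm.symm.trans hB).trans hv'.symm)
      · have hu : u = Finsupp.single b 1 :=
          eq_single_diag (a := b) (show b.1 = (j, j) from rfl)
            (by rw [hdeg, ← hvm, hB, hdv])
        exact huv' (hu.trans (hB.symm.trans hvm))
    · -- v is the full monomial : success
      refine ⟨g, hgF, u, v', huv', hg, ?_⟩
      have hM : (X a * X b : MvPolynomial (VarSet n G) K) = monomial v 1 := by
        rw [X_eq_monomial, X_eq_monomial, monomial_mul, one_mul, ← hAB]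
      rcases hvmem with rfl | rfl
      · exact Or.inl hM
      · exact Or.inr hM
  · -- Part 2 : x_{ij} x_{ji}
    have hcne : coeff (Finsupp.single a' 1 + Finsupp.single b' 1) (fij K hadj) ≠ 0 := by
      rw [hfij, coeff_sub, coeff_monomial, coeff_monomial, if_neg hu01,
        if_pos rfl, zero_sub]
      simp
    obtain ⟨g, hgF, w, v, hwv, hv⟩ := extract K hspan hcne
    obtain ⟨u, v', huv', hg⟩ := hbin g hgF
    have hvmem : v = u ∨ v = v' := coeff_bin K (by rw [← hg]; exact hv)
    have hgPG : g ∈ PG K n G := hgen ▸ Ideal.subset_span hgF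
    have hdeg : deg u = deg v' := deg_eq_of_mem K (hg ▸ hgPG)
    -- helper: a binomial with one exponent `single c 1`, c off-diagonal in {i,j}, is impossible
    have himposs : ∀ (c : VarSet n G), (c.1 = (i, j) ∨ c.1 = (j, i)) →
        (v = Finsupp.single c 1) → False := by
      intro c hc hvc
      -- the other exponent of g
      have hdc : deg (Finsupp.single c 1) = Finsupp.single i 1 + Finsupp.single j 1 := by
        rw [deg_single, one_smul, dvar]
        rcases hc with hc | hc <;> rw [hc] <;> first | rfl | exact add_comm _ _
      rcases hvmem with hvm | hvm
      · -- v = u, so deg v' = single i 1 + single j 1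
        obtain ⟨q, hq, hq'⟩ :=
          eq_single_offdiag hij' (show deg v' = _ by rw [← hdeg, ← hvm, hvc, hdc])
        have hqc : q ≠ c := by
          intro hqeq
          exact huv' ((hvm.symm.trans hvc).trans (hqeq ▸ hq).symm)
        -- g = X c - X q with c, q off-diagonal, c ≠ q ⇒ c.1.1 ≠ q.1.1
        have hfst : c.1.1 ≠ q.1.1 := by
          rcases hc with hc | hc <;> rcases hq' with hq' | hq'
          · exact absurd (Subtype.ext (hq'.trans hc.symm)) hqc
          · rw [hc, hq']; exact hij'
          · rw [hc, hq']; exact hij'.symm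
          · exact absurd (Subtype.ext (hq'.trans hc.symm)) hqc
        have hgg : g = monomial (Finsupp.single c 1) (1 : K) -
            monomial (Finsupp.single q 1) 1 := by
          rw [hg, ← hvm, hvc, hq]
        exact X_sub_X_notMem K hfst (hgg ▸ hgPG)
      · -- v = v', so deg u = single i 1 + single j 1
        obtain ⟨q, hq, hq'⟩ :=
          eq_single_offdiag hij' (show deg u = _ by rw [hdeg, ← hvm, hvc, hdc])
        have hqc : q ≠ c := by
          intro hqeq
          exact huv' ((hqeq ▸ hq).trans (hvc.symm.trans hvm))
        have hfst : q.1.1 ≠ c.1.1 := by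
          rcases hc with hc | hc <;> rcases hq' with hq' | hq'
          · exact absurd (Subtype.ext (hq'.trans hc.symm)) hqc
          · rw [hc, hq']; exact hij'.symm
          · rw [hc, hq']; exact hij'
          · exact absurd (Subtype.ext (hq'.trans hc.symm)) hqc
        have hgg : g = monomial (Finsupp.single q 1) (1 : K) -
            monomial (Finsupp.single c 1) 1 := by
          rw [hg, ← hvm, hvc, hq]
        exact X_sub_X_notMem K hfst (hgg ▸ hgPG)
    rcases div_cases ha'b' hwv with h0 | hA | hB | hAB
    · exfalso
      rcases hvmem with hvm | hvm
      · have hv'0 : v' = 0 := deg_eq_zero (by rw [← hdeg, ← hvm, h0, deg_zero])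
        exact huv' ((hvm.symm.trans h0).trans hv'0.symm)
      · have hu0 : u = 0 := deg_eq_zero (by rw [hdeg, ← hvm, h0, deg_zero])
        exact huv' (hu0.trans (h0.symm.trans hvm))
    · exact absurd hA (fun h => himposs a' (Or.inl rfl) h)
    · exact absurd hB (fun h => himposs b' (Or.inr rfl) h)
    · refine ⟨g, hgF, u, v', huv', hg, ?_⟩
      have hM : (X a' * X b' : MvPolynomial (VarSet n G) K) = monomial v 1 := by
        rw [X_eq_monomial, X_eq_monomial, monomial_mul, one_mul, ← hAB]
      rcases hvmem with rfl | rfl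
      · exact Or.inl hM
      · exact Or.inr hM
end

section
/- Let G be a finite simple graph on the vertex set {1,…,n} with m edges. Then the matrix N_G is totally unimodular (every square submatrix has determinant 0, 1, or −1) if and only if G is bipartite. -/
open MvPolynomial

/-- The `(n+m) × (2m+n)` integer matrix `N_G` whose columns are the vectors of `A_G`. -/
noncomputable def NG (n m : ℕ) (G : SimpleGraph (Fin n)) (z : Fin m ≃ G.edgeSet) :
    Matrix (Fin n ⊕ Fin m) (VarSet n G) ℤ :=
  Matrix.of fun s v => aVec n m G z v s

/-- A matrix is totally unimodular if every square submatrix (given by distinct rows and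
distinct columns) has determinant `0`, `1` or `-1`. -/
def IsTU {R C : Type} (A : Matrix R C ℤ) : Prop :=
  ∀ (k : ℕ) (r : Fin k → R) (c : Fin k → C), Function.Injective r → Function.Injective c →
    (A.submatrix r c).det = 0 ∨ (A.submatrix r c).det = 1 ∨ (A.submatrix r c).det = -1

/- ### Auxiliary lemmas -/

lemma signRange_iff (x : ℤ) :
    x ∈ Set.range (SignType.cast : SignType → ℤ) ↔ x = 0 ∨ x = 1 ∨ x = -1 := by
  constructor
  · rintro ⟨s, rfl⟩; cases s <;> simp
  · rintro (rfl | rfl | rfl)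
    exacts [⟨0, rfl⟩, ⟨1, rfl⟩, ⟨-1, by simp⟩]

lemma det_mem_range_of_single_col {l : ℕ} (M : Matrix (Fin (l+1)) (Fin (l+1)) ℤ)
    (x i0 : Fin (l+1)) (hcol : ∀ i, M i x = if i = i0 then 1 else 0)
    (hminor : (M.submatrix i0.succAbove x.succAbove).det
      ∈ Set.range (SignType.cast : SignType → ℤ)) :
    M.det ∈ Set.range (SignType.cast : SignType → ℤ) := by
  rw [Matrix.det_succ_column M x, Finset.sum_eq_single i0]
  · rw [hcol i0, if_pos rfl, mul_one]
    obtain ⟨s, hs⟩ := hminor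
    rcases Nat.even_or_odd ((i0 : ℕ) + (x : ℕ)) with he | ho
    · rw [he.neg_one_pow, one_mul]; exact ⟨s, hs⟩
    · rw [ho.neg_one_pow, neg_one_mul, ← hs]
      exact ⟨-s, by simp⟩
  · intro i _ hi
    rw [hcol i, if_neg hi, mul_zero, zero_mul]
  · intro h; exact absurd (Finset.mem_univ i0) h

lemma tu_of_two_colored_cols {V E : Type} [DecidableEq V] (A : Matrix V E ℤ) (c : V → Bool)
    (h : ∀ e : E, ∃ a b : V, c a ≠ c b ∧
      ∀ v, A v e = (Pi.single a 1 : V → ℤ) v + (Pi.single b 1 : V → ℤ) v) :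
    A.IsTotallyUnimodular := by
  choose a b hab hcol using h
  intro k
  induction k with
  | zero => intro f g _ _; exact ⟨1, by simp⟩
  | succ l ih =>
    intro f g hf hg
    by_cases hall : ∀ x : Fin (l+1), (∃ i, f i = a (g x)) ∧ (∃ i, f i = b (g x))
    · refine ⟨0, ?_⟩
      rw [SignType.coe_zero, eq_comm, ← Matrix.exists_vecMul_eq_zero_iff]
      refine ⟨fun i => if c (f i) then 1 else -1, ?_, ?_⟩
      · intro h0
        have := congrFun h0 0
        by_cases hc : c (f 0) <;> simp [hc] at this
      · funext x
        obtain ⟨⟨ia, hia⟩, ⟨ib, hib⟩⟩ := hall x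
        have hne : ia ≠ ib := fun hh => hab (g x) (by rw [← hia, hh, hib])
        have hsa : ∀ i, (Pi.single (a (g x)) 1 : V → ℤ) (f i)
            = (Pi.single ia 1 : Fin (l+1) → ℤ) i := by
          intro i
          by_cases hi : i = ia
          · subst hi; rw [hia, Pi.single_eq_same, Pi.single_eq_same]
          · rw [Pi.single_eq_of_ne (fun hh => hi (hf (hh.trans hia.symm))),
              Pi.single_eq_of_ne hi]
        have hsb : ∀ i, (Pi.single (b (g x)) 1 : V → ℤ) (f i)
            = (Pi.single ib 1 : Fin (l+1) → ℤ) i := by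
          intro i
          by_cases hi : i = ib
          · subst hi; rw [hib, Pi.single_eq_same, Pi.single_eq_same]
          · rw [Pi.single_eq_of_ne (fun hh => hi (hf (hh.trans hib.symm))),
              Pi.single_eq_of_ne hi]
        have hsum : (Matrix.vecMul (fun i => if c (f i) then (1:ℤ) else -1) (A.submatrix f g)) x
            = ∑ i, (if c (f i) then (1:ℤ) else -1) *
                ((Pi.single ia 1 : Fin (l+1) → ℤ) i + (Pi.single ib 1 : Fin (l+1) → ℤ) i) := by
          simp only [Matrix.vecMul, dotProduct, Matrix.submatrix_apply]
          refine Finset.sum_congr rfl fun i _ => ?_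
          rw [hcol (g x) (f i), hsa i, hsb i]
        rw [Pi.zero_apply, hsum]
        simp_rw [mul_add]
        rw [Finset.sum_add_distrib,
          Finset.sum_eq_single ia (fun i _ hi => by rw [Pi.single_eq_of_ne hi, mul_zero])
            (fun hh => absurd (Finset.mem_univ ia) hh),
          Finset.sum_eq_single ib (fun i _ hi => by rw [Pi.single_eq_of_ne hi, mul_zero])
            (fun hh => absurd (Finset.mem_univ ib) hh),
          Pi.single_eq_same, Pi.single_eq_same, mul_one, mul_one]
        have hcc : c (f ia) ≠ c (f ib) := by rw [hia, hib]; exact hab (g x)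
        by_cases h1 : c (f ia) <;> by_cases h2 : c (f ib) <;> simp [h1, h2] at hcc ⊢
    · push_neg at hall
      obtain ⟨x, hx⟩ := hall
      have hcase : (∀ i, f i ≠ a (g x)) ∨ (∀ i, f i ≠ b (g x)) := by
        by_cases h1 : ∃ i, f i = a (g x)
        · exact Or.inr (by simpa using (hx h1))
        · push_neg at h1; exact Or.inl h1
      obtain ⟨p, q, hpq, hp⟩ : ∃ p q, (∀ v, A v (g x) = (Pi.single p 1 : V → ℤ) v
            + (Pi.single q 1 : V → ℤ) v) ∧ (∀ i, f i ≠ p) := by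
        rcases hcase with hA | hB
        · exact ⟨a (g x), b (g x), hcol (g x), hA⟩
        · exact ⟨b (g x), a (g x), fun v => by rw [hcol (g x) v, add_comm], hB⟩
      by_cases hq : ∃ i0, f i0 = q
      · obtain ⟨i0, hi0⟩ := hq
        apply det_mem_range_of_single_col _ x i0
        · intro i
          rw [Matrix.submatrix_apply, hpq (f i), Pi.single_eq_of_ne (hp i)]
          by_cases hi : i = i0
          · subst hi; rw [hi0, Pi.single_eq_same, if_pos rfl, zero_add]
          · rw [Pi.single_eq_of_ne (fun hh => hi (hf (hh.trans hi0.symm))), if_neg hi, zero_add]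
        · rw [Matrix.submatrix_submatrix]
          exact ih _ _ (hf.comp Fin.succAbove_right_injective)
            (hg.comp Fin.succAbove_right_injective)
      · push_neg at hq
        refine ⟨0, ?_⟩
        rw [SignType.coe_zero, eq_comm]
        apply Matrix.det_eq_zero_of_column_eq_zero x
        intro i
        rw [Matrix.submatrix_apply, hpq (f i), Pi.single_eq_of_ne (hp i),
          Pi.single_eq_of_ne (hq i), add_zero]

lemma det_cycleMatrix (l : ℕ) (hl : Even l) (hl2 : 2 ≤ l) :
    (Matrix.of fun i j : Fin (l+1) => if i = j ∨ i = j + 1 then (1:ℤ) else 0).det = 2 := by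
  set D : Matrix (Fin (l+1)) (Fin (l+1)) ℤ :=
    Matrix.of fun i j : Fin (l+1) => if i = j ∨ i = j + 1 then (1:ℤ) else 0 with hD
  have hlast : (Fin.last l : Fin (l+1)) + 1 = 0 := Fin.last_add_one l
  rw [Matrix.det_succ_row_zero]
  have hzero : ∀ j : Fin (l+1), j ≠ 0 → j ≠ Fin.last l →
      (-1 : ℤ) ^ (j : ℕ) * D 0 j * (D.submatrix Fin.succ j.succAbove).det = 0 := by
    intro j hj0 hjl
    have hDj : D 0 j = 0 := by
      rw [hD]
      simp only [Matrix.of_apply]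
      rw [if_neg]
      rintro (h | h)
      · exact hj0 h.symm
      · have h2 := congrArg Fin.val h
        rw [Fin.val_add_one, if_neg hjl] at h2
        simp at h2
    rw [hDj, mul_zero, zero_mul]
  have hsplit : ∀ (F : Fin (l+1) → ℤ), (∀ j, j ≠ 0 → j ≠ Fin.last l → F j = 0) →
      ∑ j, F j = F 0 + F (Fin.last l) := by
    intro F hF
    have h0l : (0 : Fin (l+1)) ≠ Fin.last l := by
      intro h
      have := congrArg Fin.val h
      simp [Fin.last] at this
      omega
    rw [← Finset.sum_subset (Finset.subset_univ {0, Fin.last l})]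
    · rw [Finset.sum_insert (by simp [h0l]), Finset.sum_singleton]
    · intro j _ hj
      simp only [Finset.mem_insert, Finset.mem_singleton, not_or] at hj
      exact hF j hj.1 hj.2
  rw [hsplit _ hzero]
  have hD00 : D 0 0 = 1 := by rw [hD]; simp
  have hD0l : D 0 (Fin.last l) = 1 := by
    rw [hD]; simp only [Matrix.of_apply]
    rw [if_pos (Or.inr hlast.symm)]
  have hm0 : (D.submatrix Fin.succ (Fin.succAbove 0)).det = 1 := by
    have hsa : ∀ i : Fin l, Fin.succAbove 0 i = i.succ := fun i => Fin.zero_succAbove i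
    rw [Matrix.det_of_lowerTriangular]
    · apply Finset.prod_eq_one
      intro i _
      rw [Matrix.submatrix_apply, hsa, hD]
      simp
    · intro i j hij
      simp only [OrderDual.toDual_lt_toDual] at hij
      rw [Matrix.submatrix_apply, hsa, hD]
      simp only [Matrix.of_apply]
      rw [if_neg]
      rintro (h | h)
      · exact (ne_of_lt hij) (Fin.succ_injective _ h)
      · have h2 := congrArg Fin.val h
        rw [Fin.val_add_one] at h2
        by_cases hj : j.succ = Fin.last l
        · rw [if_pos hj] at h2; simp [Fin.val_succ] at h2
        · rw [if_neg hj] at h2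
          simp only [Fin.val_succ] at h2
          have hlt : (i:ℕ) < (j:ℕ) := hij
          omega
  have hml : (D.submatrix Fin.succ ((Fin.last l).succAbove)).det = 1 := by
    have hsa : ∀ i : Fin l, (Fin.last l).succAbove i = i.castSucc := by
      intro i; rw [Fin.succAbove_last]
    have hcs : ∀ i : Fin l, (i.castSucc : Fin (l+1)) ≠ Fin.last l := by
      intro i h
      have := congrArg Fin.val h
      simp [Fin.last] at this
      exact absurd this (ne_of_lt i.isLt)
    rw [Matrix.det_of_upperTriangular]
    · apply Finset.prod_eq_one
      intro i _
      rw [Matrix.submatrix_apply, hsa, hD]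
      simp only [Matrix.of_apply]
      rw [if_pos]
      right
      apply Fin.ext
      rw [Fin.val_add_one, if_neg (hcs i)]
      simp
    · intro i j hij
      have hlt : (j:ℕ) < (i:ℕ) := hij
      rw [Matrix.submatrix_apply, hsa, hD]
      simp only [Matrix.of_apply]
      rw [if_neg]
      rintro (h | h)
      · have h2 := congrArg Fin.val h
        simp only [Fin.val_succ, Fin.coe_castSucc] at h2
        omega
      · have h2 := congrArg Fin.val h
        rw [Fin.val_add_one, if_neg (hcs j)] at h2
        simp only [Fin.val_succ, Fin.coe_castSucc] at h2
        omega
  rw [hD00, hD0l, hm0, hml]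
  have hv : ((Fin.last l : Fin (l+1)) : ℕ) = l := rfl
  rw [hv, hl.neg_one_pow]
  norm_num

lemma exists_oddClosedWalk {V : Type} {G : SimpleGraph V} (h : ¬ G.Colorable 2) :
    ∃ (k : ℕ) (ω : ℕ → V), Odd k ∧ ω k = ω 0 ∧ ∀ i < k, G.Adj (ω i) (ω (i+1)) := by
  by_contra hcon
  push_neg at hcon
  apply h
  have hcol : ∀ ⦃u v : V⦄, G.Adj u v →
      (if Even (G.dist ((G.connectedComponentMk u).out) u) then (0 : Fin 2) else 1) ≠
      (if Even (G.dist ((G.connectedComponentMk v).out) v) then (0 : Fin 2) else 1) := by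
    intro u v huv heq
    have hcc : G.connectedComponentMk u = G.connectedComponentMk v :=
      SimpleGraph.ConnectedComponent.sound huv.reachable
    set r := (G.connectedComponentMk u).out with hr
    have hru : G.Reachable r u :=
      SimpleGraph.ConnectedComponent.exact (G.connectedComponentMk u).out_eq
    have hrv : G.Reachable r v := by
      rw [hr, hcc]
      exact SimpleGraph.ConnectedComponent.exact (G.connectedComponentMk v).out_eq
    obtain ⟨p1, hp1⟩ := hru.exists_walk_length_eq_dist
    obtain ⟨p2, hp2⟩ := hrv.exists_walk_length_eq_dist
    rw [← hcc, ← hr] at heq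
    have hpar : Even (G.dist r u) ↔ Even (G.dist r v) := by
      by_cases h1 : Even (G.dist r u) <;> by_cases h2 : Even (G.dist r v)
      · tauto
      · rw [if_pos h1, if_neg h2] at heq; exact absurd heq (by decide)
      · rw [if_neg h1, if_pos h2] at heq; exact absurd heq (by decide)
      · tauto
    set w : G.Walk r r := p1.append (SimpleGraph.Walk.cons huv p2.reverse) with hw
    have hlen : w.length = p1.length + (p2.length + 1) := by
      rw [hw, SimpleGraph.Walk.length_append, SimpleGraph.Walk.length_cons,
        SimpleGraph.Walk.length_reverse]
    have hodd : Odd w.length := by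
      rw [hlen, hp1, hp2]
      rcases Nat.even_or_odd (G.dist r u) with he | ho
      · have h2 := hpar.mp he
        rw [Nat.even_iff] at he h2
        rw [Nat.odd_iff]
        omega
      · have hv2 : ¬ Even (G.dist r v) := by
          rw [← hpar]
          exact Nat.not_even_iff_odd.mpr ho
        rw [Nat.odd_iff] at ho
        rw [Nat.not_even_iff] at hv2
        rw [Nat.odd_iff]
        omega
    obtain ⟨i, hik, hnadj⟩ := hcon w.length w.getVert hodd
      (by rw [SimpleGraph.Walk.getVert_length, SimpleGraph.Walk.getVert_zero])
    exact hnadj (w.adj_getVert_succ hik)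
  exact ⟨SimpleGraph.Coloring.mk
    (fun u => if Even (G.dist ((G.connectedComponentMk u).out) u) then (0 : Fin 2) else 1)
    (fun {a b} hab => hcol hab)⟩

lemma exists_oddCycleFun {V : Type} {G : SimpleGraph V}
    (h : ∃ (k : ℕ) (ω : ℕ → V), Odd k ∧ ω k = ω 0 ∧ ∀ i < k, G.Adj (ω i) (ω (i+1))) :
    ∃ (k : ℕ) (v : ℕ → V), Odd k ∧ v k = v 0 ∧ (∀ i < k, G.Adj (v i) (v (i+1))) ∧
      ∀ i j, i < j → j < k → v i ≠ v j := by
  classical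
  set P : ℕ → Prop := fun k => Odd k ∧ ∃ ω : ℕ → V, ω k = ω 0 ∧ ∀ i < k, G.Adj (ω i) (ω (i+1))
    with hP
  have hex : ∃ k, P k := by
    obtain ⟨k, ω, h1, h2, h3⟩ := h
    exact ⟨k, h1, ω, h2, h3⟩
  obtain ⟨hodd, ω, hcl, hadj⟩ := Nat.find_spec hex
  set k := Nat.find hex with hk
  refine ⟨k, ω, hodd, hcl, hadj, ?_⟩
  intro i j hij hjk heq
  have hsub : P (j - i) ∨ P (k - (j - i)) := by
    rcases Nat.even_or_odd (j - i) with he | ho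
    · right
      constructor
      · rw [Nat.odd_iff] at hodd ⊢
        rw [Nat.even_iff] at he
        omega
      · refine ⟨fun t => if t ≤ i then ω t else ω (t + (j - i)), ?_, ?_⟩
        · dsimp only
          have h1 : ¬ (k - (j - i) ≤ i) := by omega
          rw [if_neg h1, if_pos (Nat.zero_le i)]
          have h2 : k - (j - i) + (j - i) = k := by omega
          rw [h2, hcl]
        · intro t ht
          dsimp only
          by_cases h1 : t + 1 ≤ i
          · rw [if_pos (by omega : t ≤ i), if_pos h1]
            exact hadj t (by omega)
          · by_cases h2 : t ≤ i
            · have hti : t = i := by omega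
              rw [if_pos h2, if_neg h1, hti, heq]
              have h3 : i + 1 + (j - i) = j + 1 := by omega
              rw [h3]
              exact hadj j (by omega)
            · rw [if_neg h2, if_neg h1]
              have h3 : t + 1 + (j - i) = t + (j - i) + 1 := by omega
              rw [h3]
              exact hadj (t + (j - i)) (by omega)
    · left
      refine ⟨ho, fun t => ω (i + t), ?_, ?_⟩
      · dsimp only
        have h1 : i + (j - i) = j := by omega
        rw [h1, Nat.add_zero]
        exact heq.symm
      · intro t ht
        dsimp only
        have h1 : i + (t + 1) = i + t + 1 := by omega
        rw [h1]
        exact hadj (i + t) (by omega)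
  rcases hsub with hp | hp
  · exact absurd hp (Nat.find_min hex (by omega))
  · exact absurd hp (Nat.find_min hex (by omega))

/-- Incidence matrix of `G` w.r.t. the edge enumeration `z`. -/
noncomputable def IncB (n m : ℕ) (G : SimpleGraph (Fin n)) (z : Fin m ≃ G.edgeSet) :
    Matrix (Fin n) (Fin m) ℤ :=
  Matrix.of fun i t => if i ∈ (z t : Sym2 (Fin n)) then 1 else 0

/-- The big matrix of which `NG` is a column-submatrix. -/
noncomputable def BigM (n m : ℕ) (G : SimpleGraph (Fin n)) (z : Fin m ≃ G.edgeSet) :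
    Matrix (Fin n ⊕ Fin m) (Fin m ⊕ (Fin n ⊕ Fin m)) ℤ :=
  Matrix.fromCols (Matrix.fromRows (IncB n m G z) (-(1 : Matrix (Fin m) (Fin m) ℤ))) 1

noncomputable def cmap (n m : ℕ) (G : SimpleGraph (Fin n)) (z : Fin m ≃ G.edgeSet)
    (v : VarSet n G) : Fin m ⊕ (Fin n ⊕ Fin m) :=
  if hij : v.1.1 = v.1.2 then Sum.inr (Sum.inl v.1.1)
  else if v.1.1 < v.1.2 then Sum.inl (edgeIdx z (v.2.resolve_left hij))
  else Sum.inr (Sum.inr (edgeIdx z (v.2.resolve_left hij)))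

lemma NG_eq (n m : ℕ) (G : SimpleGraph (Fin n)) (z : Fin m ≃ G.edgeSet) :
    NG n m G z = (BigM n m G z).submatrix id (cmap n m G z) := by
  ext s v
  rw [NG, Matrix.of_apply, aVec, Matrix.submatrix_apply, id, cmap]
  by_cases h1 : v.1.1 = v.1.2
  · rw [dif_pos h1, dif_pos h1, BigM, Matrix.fromCols_apply_inr, Matrix.one_apply,
      Pi.single_apply]
  · have hadj : G.Adj v.1.1 v.1.2 := v.2.resolve_left h1
    have hzt : (↑(z (edgeIdx z hadj)) : Sym2 (Fin n)) = s(v.1.1, v.1.2) := by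
      rw [edgeIdx, Equiv.apply_symm_apply]
    by_cases h2 : v.1.1 < v.1.2
    · rw [dif_neg h1, dif_neg h1]
      rw [if_pos h2, if_pos h2, BigM, Matrix.fromCols_apply_inl]
      rcases s with w | u
      · rw [Matrix.fromRows_apply_inl, IncB, Matrix.of_apply, hzt]
        simp only [Sym2.mem_iff, Pi.sub_apply, Pi.add_apply, Pi.single_apply, Sum.inl.injEq]
        have h1' : ¬(v.1.2 = v.1.1) := fun hh => h1 hh.symm
        by_cases hw1 : w = v.1.1 <;> by_cases hw2 : w = v.1.2 <;>
          simp [hw1, hw2, h1, h1']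
      · rw [Matrix.fromRows_apply_inr, Matrix.neg_apply, Matrix.one_apply]
        simp only [Pi.sub_apply, Pi.add_apply, Pi.single_apply, Sum.inr.injEq]
        by_cases hu : u = edgeIdx z hadj <;> simp [hu]
    · rw [dif_neg h1, dif_neg h1]
      rw [if_neg h2, if_neg h2, BigM, Matrix.fromCols_apply_inr,
        Matrix.one_apply, Pi.single_apply]

/-- The matrix `N_G` is totally unimodular if and only if `G` is bipartite. -/
theorem NG_totallyUnimodular_iff_bipartite (n m : ℕ) (G : SimpleGraph (Fin n))
    (z : Fin m ≃ G.edgeSet) :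
    IsTU (NG n m G z) ↔ G.Colorable 2 := by
  constructor
  · intro htu
    by_contra hncol
    obtain ⟨k, v, hodd, hcl, hadj, hinj⟩ := exists_oddCycleFun (exists_oddClosedWalk hncol)
    obtain ⟨l, rfl⟩ : ∃ l, k = l + 1 := by
      rcases k with _ | l
      · exact absurd hodd (by simp)
      · exact ⟨l, rfl⟩
    have hl0 : l ≠ 0 := by
      rintro rfl
      have h01 := hadj 0 (by omega)
      rw [show (0:ℕ) + 1 = 0 + 1 from rfl, hcl] at h01
      exact G.irrefl h01
    have hleven : Even l := by
      rw [Nat.odd_iff] at hodd; rw [Nat.even_iff]; omega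
    have hl2 : 2 ≤ l := by
      rcases hleven with ⟨c, hc⟩; omega
    set vv : Fin (l+1) → Fin n := fun i => v i.val with hvv
    have hvadd : ∀ i : Fin (l+1), ((i+1 : Fin (l+1)).val = i.val + 1 ∧ i.val < l)
        ∨ ((i+1 : Fin (l+1)).val = 0 ∧ i.val = l) := by
      intro i
      by_cases hi : i = Fin.last l
      · right
        rw [hi, Fin.last_add_one]
        exact ⟨rfl, rfl⟩
      · left
        have h1 := Fin.val_add_one i
        rw [if_neg hi] at h1
        have h2 : i.val < l := by
          have h3 := i.isLt
          by_contra hc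
          exact hi (Fin.ext (by simp [Fin.last]; omega))
        exact ⟨h1, h2⟩
    have hvv_adj : ∀ i : Fin (l+1), G.Adj (vv i) (vv (i+1)) := by
      intro i
      rcases hvadd i with ⟨h1, h2⟩ | ⟨h1, h2⟩
      · rw [hvv]; dsimp only; rw [h1]; exact hadj i.val (by omega)
      · rw [hvv]; dsimp only; rw [h1, h2, ← hcl]; exact hadj l (by omega)
    have hvv_inj : Function.Injective vv := by
      intro i j hij2
      rcases lt_trichotomy i.val j.val with h | h | h
      · exact absurd hij2 (hinj i.val j.val h j.isLt)
      · exact Fin.ext h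
      · exact absurd hij2.symm (hinj j.val i.val h i.isLt)
    set f : Fin (l+1) → Fin n ⊕ Fin m := fun i => Sum.inl (vv i) with hfdef
    have hf_inj : Function.Injective f := fun i j hij2 => hvv_inj (Sum.inl.inj hij2)
    set g : Fin (l+1) → VarSet n G := fun j =>
      if h : vv j < vv (j+1) then ⟨(vv j, vv (j+1)), Or.inr (hvv_adj j)⟩
      else ⟨(vv (j+1), vv j), Or.inr (hvv_adj j).symm⟩ with hgdef
    have hcontra : ∀ x y : Fin (l+1), x = y + 1 → y = x + 1 → False := by
      intro x y h1 h2
      have e1 := congrArg Fin.val h1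
      have e2 := congrArg Fin.val h2
      rcases hvadd x with ⟨a1, b1⟩ | ⟨a1, b1⟩ <;> rcases hvadd y with ⟨a2, b2⟩ | ⟨a2, b2⟩ <;>
        rw [a1] at e2 <;> rw [a2] at e1 <;> omega
    have hg_inj : Function.Injective g := by
      intro x y hxy
      rw [hgdef] at hxy
      dsimp only at hxy
      by_cases h1 : vv x < vv (x+1) <;> by_cases h2 : vv y < vv (y+1)
      · rw [dif_pos h1, dif_pos h2] at hxy
        have hp := congrArg Subtype.val hxy
        obtain ⟨q1, q2⟩ := Prod.mk.injEq _ _ _ _ ▸ hp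
        exact hvv_inj q1
      · rw [dif_pos h1, dif_neg h2] at hxy
        have hp := congrArg Subtype.val hxy
        obtain ⟨q1, q2⟩ := Prod.mk.injEq _ _ _ _ ▸ hp
        exact (hcontra x y (hvv_inj q1) (hvv_inj q2).symm).elim
      · rw [dif_neg h1, dif_pos h2] at hxy
        have hp := congrArg Subtype.val hxy
        obtain ⟨q1, q2⟩ := Prod.mk.injEq _ _ _ _ ▸ hp
        exact (hcontra x y (hvv_inj q2) ((hvv_inj q1).symm)).elim
      · rw [dif_neg h1, dif_neg h2] at hxy
        have hp := congrArg Subtype.val hxy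
        obtain ⟨q1, q2⟩ := Prod.mk.injEq _ _ _ _ ▸ hp
        exact hvv_inj q2
    have hjj1 : ∀ j : Fin (l+1), j ≠ j + 1 := by
      intro j hj
      have h2 := congrArg Fin.val hj
      rcases hvadd j with ⟨a1, b1⟩ | ⟨a1, b1⟩ <;> rw [a1] at h2 <;> omega
    have hS : (NG n m G z).submatrix f g
        = Matrix.of (fun i j : Fin (l+1) => if i = j ∨ i = j + 1 then (1:ℤ) else 0) := by
      ext i j
      show aVec n m G z (g j) (Sum.inl (vv i))
        = Matrix.of (fun i j : Fin (l+1) => if i = j ∨ i = j + 1 then (1:ℤ) else 0) i j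
      have key : ∀ (a b : Fin n) (hab : G.Adj a b) (hlt : a < b),
          aVec n m G z ⟨(a, b), Or.inr hab⟩ (Sum.inl (vv i))
          = (if vv i = a then (1:ℤ) else 0) + (if vv i = b then 1 else 0) := by
        intro a b hab hlt
        rw [aVec]
        dsimp only
        rw [dif_neg hab.ne]
        rw [if_pos hlt]
        simp [Pi.single_apply]
      have hgj : g j = if h : vv j < vv (j+1) then ⟨(vv j, vv (j+1)), Or.inr (hvv_adj j)⟩
          else ⟨(vv (j+1), vv j), Or.inr (hvv_adj j).symm⟩ := rfl
      rw [hgj]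
      by_cases hj : vv j < vv (j+1)
      · rw [dif_pos hj, key _ _ (hvv_adj j) hj, Matrix.of_apply]
        simp only [hvv_inj.eq_iff]
        by_cases e1 : i = j <;> by_cases e2 : i = j + 1
        · exact absurd (e1.symm.trans e2) (hjj1 j)
        · simp [e1, e2, hl0]
        · simp [e1, e2, hl0]
        · simp [e1, e2, hl0]
      · have hlt : vv (j+1) < vv j := lt_of_le_of_ne (not_lt.mp hj) (hvv_adj j).ne'
        rw [dif_neg hj, key _ _ (hvv_adj j).symm hlt, Matrix.of_apply]
        simp only [hvv_inj.eq_iff]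
        by_cases e1 : i = j <;> by_cases e2 : i = j + 1
        · exact absurd (e1.symm.trans e2) (hjj1 j)
        · simp [e1, e2, hl0]
        · simp [e1, e2, hl0]
        · simp [e1, e2, hl0]
    have hdet := htu (l+1) f g hf_inj hg_inj
    rw [hS, det_cycleMatrix l hleven hl2] at hdet
    norm_num at hdet
  · intro hcol
    obtain ⟨C⟩ := hcol
    have hBtu : (IncB n m G z).IsTotallyUnimodular := by
      apply tu_of_two_colored_cols _ (fun x => decide (C x = 0))
      intro e
      have hrep : ∀ (s : Sym2 (Fin n)), s ∈ G.edgeSet → ∃ a b, G.Adj a b ∧ s = s(a, b) := by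
        intro s
        induction s using Sym2.ind with
        | _ a b => intro hs; exact ⟨a, b, hs, rfl⟩
      obtain ⟨a, b, hadj2, hab⟩ := hrep _ (z e).2
      refine ⟨a, b, ?_, ?_⟩
      · have hC := C.valid hadj2
        have hd : ∀ x y : Fin 2, x ≠ y → decide (x = 0) ≠ decide (y = 0) := by decide
        exact hd _ _ hC
      · intro w
        rw [IncB, Matrix.of_apply, hab]
        simp only [Sym2.mem_iff, Pi.single_apply]
        by_cases hw1 : w = a <;> by_cases hw2 : w = b
        · exact absurd (hw1.symm.trans hw2) hadj2.ne
        · simp [hw1, hw2, hadj2.ne, hadj2.ne']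
        · simp [hw1, hw2, hadj2.ne, hadj2.ne']
        · simp [hw1, hw2, hadj2.ne, hadj2.ne']
    have hunit : Nonempty (Fin m) → ∀ i : Fin m, ∃ (j : Fin m) (s : SignType),
        (-(1 : Matrix (Fin m) (Fin m) ℤ)) i = Pi.single j (s : ℤ) := by
      intro _ i
      refine ⟨i, -1, ?_⟩
      funext j
      by_cases h : j = i
      · subst h; simp
      · simp [Matrix.one_apply, h, Ne.symm h, Pi.single_apply]
    have hMtu := (Matrix.fromRows_isTotallyUnimodular_iff_rows hunit).mpr hBtu
    have hBig : (BigM n m G z).IsTotallyUnimodular := by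
      rw [BigM]
      exact (Matrix.fromCols_one_isTotallyUnimodular_iff _).mpr hMtu
    have hNG : (NG n m G z).IsTotallyUnimodular := by
      rw [NG_eq]
      exact hBig.submatrix _ _
    intro k r c hr hc
    exact (signRange_iff _).mp (hNG k r c hr hc)
end
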